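/- Let β > 0, e₀' ∈ ℝ, and let K be a compact subset of ℂ \ (-∞, -exp(β·e₀')]. Then there exists η > 0 such that for every z ∈ K and every ξ ∈ ℂ with Re ξ ≥ e₀' and |Im ξ| ≤ η/β, one has 1 + z·exp(-β·ξ) ∉ (-∞, 0]. -/

import Mathlib

open Complex Set

/-- Fermi case: if `K` is a compact subset of
`ℂ \ (-∞, -exp(β·e₀')]`, there exists `η > 0` such that for all `z ∈ K` and
`ξ` with `Re ξ ≥ e₀'` and `|Im ξ| ≤ η/β`, the value `1 + z·exp(-β·ξ)` avoids
the branch cut `(-∞, 0]`. -/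
theorem stmt_2 (β e₀' : ℝ) (hβ : 0 < β) (K : Set ℂ) (hK : IsCompact K)
    (hKD : K ⊆ {z : ℂ | ¬ (z.im = 0 ∧ z.re ≤ -Real.exp (β * e₀'))}) :
    ∃ η > 0, ∀ z ∈ K, ∀ ξ : ℂ, e₀' ≤ ξ.re → |ξ.im| ≤ η / β →
      ¬ ((1 + z * Complex.exp (-(β : ℂ) * ξ)).im = 0 ∧
         (1 + z * Complex.exp (-(β : ℂ) * ξ)).re ≤ 0) := by
  obtain ⟨M, hM0, hM⟩ := hK.isBounded.subset_closedBall_lt 0 0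
  have hSclosed : IsClosed {z : ℂ | z.im = 0 ∧ z.re ≤ -Real.exp (β * e₀')} := by
    exact IsClosed.inter (isClosed_eq Complex.continuous_im continuous_const)
      (isClosed_le Complex.continuous_re continuous_const)
  obtain ⟨δ, hδ, hthick⟩ := hK.exists_thickening_subset_open hSclosed.isOpen_compl hKD
  refine ⟨min 1 (δ / (2 * M + 2)), by positivity, ?_⟩
  intro z hz ξ hre him hcontra
  obtain ⟨him0, hre0⟩ := hcontra
  set w := z * Complex.exp (-(β : ℂ) * ξ) with hwdef
  have hwim : w.im = 0 := by simpa using him0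
  have hwre : w.re ≤ -1 := by
    have : (1 + w).re = 1 + w.re := by simp
    rw [this] at hre0; linarith
  set c := w.re with hcdef
  have hw' : w = (c : ℂ) := by
    apply Complex.ext <;> simp [hwim, hcdef]
  have hz' : z = (c : ℂ) * Complex.exp ((β : ℂ) * ξ) := by
    rw [← hw', hwdef, mul_assoc, ← Complex.exp_add]
    norm_num
  set p := -c * Real.exp (β * ξ.re) with hpdef
  have hexpmono : Real.exp (β * e₀') ≤ Real.exp (β * ξ.re) :=
    Real.exp_le_exp.mpr (by nlinarith)
  have hpexp : Real.exp (β * e₀') ≤ p := by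
    nlinarith [Real.exp_pos (β * ξ.re)]
  have habsz : ‖z‖ = p := by
    rw [hz', norm_mul, Complex.norm_exp]
    have h1 : ((β : ℂ) * ξ).re = β * ξ.re := by simp
    have h2 : ‖(c : ℂ)‖ = -c := by
      rw [Complex.norm_real, Real.norm_eq_abs, abs_of_nonpos (by linarith)]
    rw [h1, h2, hpdef]
  have hpM : p ≤ M := by
    rw [← habsz]
    have := hM hz
    simpa [Complex.dist_eq] using this
  -- split exp
  have hsplit : Complex.exp ((β : ℂ) * ξ) =
      (Real.exp (β * ξ.re) : ℂ) * Complex.exp ((β * ξ.im : ℝ) * Complex.I) := by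
    rw [show ((β : ℂ) * ξ) = ((β * ξ.re : ℝ) : ℂ) + ((β * ξ.im : ℝ) : ℂ) * Complex.I from
      by apply Complex.ext <;> simp, Complex.exp_add, Complex.ofReal_exp]
  -- bound on the angle
  have hθ : |β * ξ.im| ≤ min 1 (δ / (2 * M + 2)) := by
    have h1 : |β * ξ.im| = β * |ξ.im| := by
      rw [abs_mul, abs_of_pos hβ]
    have h2 : β * |ξ.im| ≤ β * (min 1 (δ / (2 * M + 2)) / β) :=
      mul_le_mul_of_nonneg_left him hβ.le
    have h3 : β * (min 1 (δ / (2 * M + 2)) / β) = min 1 (δ / (2 * M + 2)) := by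
      field_simp
    rw [h1]; rw [h3] at h2; exact h2
  have hθ1 : |β * ξ.im| ≤ 1 := hθ.trans (min_le_left _ _)
  have hθ2 : |β * ξ.im| ≤ δ / (2 * M + 2) := hθ.trans (min_le_right _ _)
  have habsI : ‖((β * ξ.im : ℝ) : ℂ) * Complex.I‖ = |β * ξ.im| := by
    simp [abs_mul]
  have hexpbound : ‖Complex.exp (((β * ξ.im : ℝ) : ℂ) * Complex.I) - 1‖
      ≤ 2 * |β * ξ.im| := by
    have := Complex.norm_exp_sub_one_le (x := ((β * ξ.im : ℝ) : ℂ) * Complex.I)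
      (by rw [habsI]; exact hθ1)
    rwa [habsI] at this
  -- the point on the cut
  set w₀ : ℂ := ((-p : ℝ) : ℂ) with hw₀
  have hdist : dist w₀ z < δ := by
    have hdiff : w₀ - z = (c : ℂ) * (Real.exp (β * ξ.re) : ℂ) *
        (1 - Complex.exp (((β * ξ.im : ℝ) : ℂ) * Complex.I)) := by
      rw [hz', hsplit, hw₀, hpdef]
      push_cast
      ring
    rw [Complex.dist_eq, hdiff]
    rw [norm_mul, norm_mul]
    have h2 : ‖(c : ℂ)‖ = -c := by
      rw [Complex.norm_real, Real.norm_eq_abs, abs_of_nonpos (by linarith)]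
    have h3 : ‖(Real.exp (β * ξ.re) : ℂ)‖ = Real.exp (β * ξ.re) := by
      rw [Complex.norm_real, Real.norm_eq_abs, abs_of_pos (Real.exp_pos _)]
    rw [h2, h3]
    have h4 : ‖1 - Complex.exp (((β * ξ.im : ℝ) : ℂ) * Complex.I)‖
        ≤ 2 * |β * ξ.im| := by rw [← norm_neg]; simpa using hexpbound
    have hppos : 0 < p := lt_of_lt_of_le (Real.exp_pos _) hpexp
    have : -c * Real.exp (β * ξ.re) * ‖1 - Complex.exp (((β * ξ.im : ℝ) : ℂ) * Complex.I)‖ ≤ p * (2 * |β * ξ.im|) := by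
      rw [← hpdef]
      exact mul_le_mul_of_nonneg_left h4 hppos.le
    have hfin : p * (2 * |β * ξ.im|) < δ := by
      have h5 : p * (2 * |β * ξ.im|) ≤ M * (2 * (δ / (2 * M + 2))) := by
        apply mul_le_mul hpM (by linarith) (by positivity) (by linarith)
      have h6 : M * (2 * (δ / (2 * M + 2))) < δ := by
        have hq : δ / (2 * M + 2) * (2 * M + 2) = δ := by
          field_simp
        have hqpos : 0 < δ / (2 * M + 2) := by positivity
        nlinarith
      linarith
    calc -c * Real.exp (β * ξ.re) * _ ≤ p * (2 * |β * ξ.im|) := this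
      _ < δ := hfin
  have hmem : w₀ ∈ Metric.thickening δ K :=
    Metric.mem_thickening_iff.mpr ⟨z, hz, hdist⟩
  have := hthick hmem
  apply this
  constructor
  · simp [hw₀]
  · simp only [hw₀, Complex.ofReal_re]
    linarith
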